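/- For every δ ∈ (0,1), metric spaces (M, d_M), (N, d_N), every closed S ⊆ M, every x₁,…,xₙ ∈ M \ S, and every Lipschitz map φ : S → N with Lipschitz constant L, if K = e_n(M; N) < ∞ then there exists Φ : S ∪ {x₁,…,xₙ} → N extending φ with Lipschitz constant at most (2 + δ + (1+δ)² K) · L. -/

import Mathlib

open Set ENNReal NNReal

/-- The (possibly infinite) Lipschitz constant of `φ` restricted to `A`. -/
noncomputable def lipConstOn {M N : Type*} [MetricSpace M] [MetricSpace N]
    (φ : M → N) (A : Set M) : ℝ≥0∞ :=
  sInf {C : ℝ≥0∞ | ∀ x ∈ A, ∀ y ∈ A, edist (φ x) (φ y) ≤ C * edist x y}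

/-- `eFin M N n = e_n(M; N)`. -/
noncomputable def eFin (M N : Type*) [MetricSpace M] [MetricSpace N] (n : ℕ) : ℝ≥0∞ :=
  ⨆ (A : Set M) (_ : A.encard ≤ (n : ℕ∞)),
    sInf {K : ℝ≥0∞ | 1 ≤ K ∧ ∀ φ : M → N, lipConstOn φ A < ⊤ →
      ∃ Φ : M → N, (∀ a ∈ A, Φ a = φ a) ∧ lipConstOn Φ Set.univ ≤ K * lipConstOn φ A}

lemma edist_le_lipConstOn {M N : Type*} [MetricSpace M] [MetricSpace N]
    (f : M → N) (A : Set M) {x y : M} (hx : x ∈ A) (hy : y ∈ A) :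
    edist (f x) (f y) ≤ lipConstOn f A * edist x y := by
  by_cases h0 : edist x y = 0
  · have hxy : x = y := edist_eq_zero.mp h0
    subst hxy; simp
  · have ht : edist x y ≠ ⊤ := edist_ne_top x y
    have h1 : edist (f x) (f y) / edist x y ≤ lipConstOn f A := by
      refine le_sInf fun C hC => ?_
      exact (ENNReal.div_le_iff_le_mul (Or.inl h0) (Or.inl ht)).mpr (hC x hx y hy)
    calc edist (f x) (f y) = edist (f x) (f y) / edist x y * edist x y :=
          (ENNReal.div_mul_cancel h0 ht).symm
      _ ≤ lipConstOn f A * edist x y := mul_le_mul_left h1 _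

lemma lipConstOn_le {M N : Type*} [MetricSpace M] [MetricSpace N]
    {f : M → N} {A : Set M} {C : ℝ≥0∞}
    (h : ∀ x ∈ A, ∀ y ∈ A, edist (f x) (f y) ≤ C * edist x y) :
    lipConstOn f A ≤ C := sInf_le h

/-- Quantitative extension: if `K = e_n(M;N) < ∞`, then any `L`-Lipschitz `φ : S → N`
on a closed `S` extends to `S ∪ {x₁,…,xₙ}` with Lipschitz constant at most
`(2 + δ + (1+δ)² K) L`, for any `δ ∈ (0,1)`. -/
theorem extension_to_finitely_many_points
    {M N : Type*} [MetricSpace M] [MetricSpace N] (n : ℕ)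
    (δ : ℝ≥0) (hδ0 : 0 < δ) (hδ1 : δ < 1)
    (S : Set M) (hSclosed : IsClosed S)
    (x : Fin n → M) (hx : ∀ j, x j ∉ S)
    (φ : M → N) (L : ℝ≥0) (hφ : LipschitzOnWith L φ S)
    (hK : eFin M N n ≠ ⊤) :
    ∃ Φ : M → N, (∀ s ∈ S, Φ s = φ s) ∧
      ∀ a ∈ S ∪ Set.range x, ∀ b ∈ S ∪ Set.range x,
        edist (Φ a) (Φ b) ≤
          ((2 + (δ : ℝ≥0∞) + (1 + (δ : ℝ≥0∞)) ^ 2 * eFin M N n) * (L : ℝ≥0∞)) * edist a b := by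
  classical
  set KK := eFin M N n with hKK
  have hδ' : (δ : ℝ≥0∞) ≠ 0 := by exact_mod_cast hδ0.ne'
  rcases S.eq_empty_or_nonempty with hS | hS
  · subst hS
    by_cases hM : Nonempty (Fin n)
    · refine ⟨fun _ => φ (x hM.some), by simp, ?_⟩
      intro a _ b _
      simp
    · refine ⟨φ, by simp, ?_⟩
      intro a ha b hb
      rcases ha with h | ⟨j, rfl⟩
      · exact absurd h (notMem_empty a)
      · exact (hM ⟨j⟩).elim
  · -- choose near-optimal points `s j ∈ S`
    have hr : ∀ j, EMetric.infEdist (x j) S ≠ 0 := by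
      intro j h
      exact hx j (hSclosed.closure_eq ▸ EMetric.mem_closure_iff_infEdist_zero.mpr h)
    have hchoice : ∀ j : Fin n, ∃ p ∈ S,
        edist (x j) p < (1 + (δ : ℝ≥0∞)) * EMetric.infEdist (x j) S := by
      intro j
      apply EMetric.infEdist_lt_iff.mp
      have hfin : EMetric.infEdist (x j) S ≠ ⊤ :=
        ((EMetric.infEdist_le_edist_of_mem hS.choose_spec).trans_lt (edist_lt_top _ _)).ne
      calc EMetric.infEdist (x j) S
          < EMetric.infEdist (x j) S + δ * EMetric.infEdist (x j) S :=
            ENNReal.lt_add_right hfin (by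
              simp only [ne_eq, mul_eq_zero, not_or]; exact ⟨hδ', hr j⟩)
        _ = (1 + (δ : ℝ≥0∞)) * EMetric.infEdist (x j) S := by ring
    choose s hsS hsd using hchoice
    have hA : (Set.range s).encard ≤ (n : ℕ∞) := by
      rw [← Set.image_univ]
      calc (s '' univ).encard ≤ (univ : Set (Fin n)).encard := Set.encard_image_le _ _
        _ ≤ (n : ℕ∞) := by rw [Set.encard_univ]; simp
    set T := {K : ℝ≥0∞ | 1 ≤ K ∧ ∀ φ : M → N, lipConstOn φ (Set.range s) < ⊤ →
      ∃ Φ : M → N, (∀ a ∈ Set.range s, Φ a = φ a) ∧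
        lipConstOn Φ Set.univ ≤ K * lipConstOn φ (Set.range s)} with hT
    have hcK : sInf T ≤ KK := by
      rw [hKK, eFin]
      exact le_iSup_of_le (Set.range s) (le_iSup_of_le hA le_rfl)
    have hc1 : (1 : ℝ≥0∞) ≤ sInf T := le_sInf fun K hK' => hK'.1
    have hcne : sInf T ≠ ⊤ := fun h => hK (top_le_iff.mp (h ▸ hcK))
    have hlt : sInf T < sInf T + δ * sInf T :=
      ENNReal.lt_add_right hcne (by
        simp only [ne_eq, mul_eq_zero, not_or]
        exact ⟨hδ', fun h => by simp [h] at hc1⟩)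
    obtain ⟨K', hK'T, hK'lt⟩ := sInf_lt_iff.mp hlt
    have hK'le : K' ≤ (1 + (δ : ℝ≥0∞)) * KK := by
      calc K' ≤ (1 + (δ : ℝ≥0∞)) * sInf T := by
            rw [one_add_mul]; exact hK'lt.le
        _ ≤ (1 + (δ : ℝ≥0∞)) * KK := mul_le_mul_right hcK _
    have hsub : ∀ a ∈ Set.range s, a ∈ S := by rintro a ⟨j, rfl⟩; exact hsS j
    have hφA : lipConstOn φ (Set.range s) ≤ (L : ℝ≥0∞) :=
      lipConstOn_le fun a ha b hb => hφ (hsub a ha) (hsub b hb)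
    obtain ⟨Φ₀, hΦ₀A, hΦ₀lip⟩ := hK'T.2 φ (hφA.trans_lt ENNReal.coe_lt_top)
    have hC : lipConstOn Φ₀ Set.univ ≤ (1 + (δ : ℝ≥0∞)) * KK * L :=
      hΦ₀lip.trans (mul_le_mul' hK'le hφA)
    refine ⟨fun m => if m ∈ S then φ m else Φ₀ m, fun t ht => if_pos ht, ?_⟩
    have key : ∀ j : Fin n, ∀ t ∈ S, edist (Φ₀ (x j)) (φ t) ≤
        ((2 + (δ : ℝ≥0∞) + (1 + (δ : ℝ≥0∞)) ^ 2 * KK) * (L : ℝ≥0∞)) * edist (x j) t := by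
      intro j t ht
      have h1 : edist (Φ₀ (x j)) (Φ₀ (s j)) ≤
          (1 + (δ : ℝ≥0∞)) * KK * L * edist (x j) (s j) :=
        (edist_le_lipConstOn Φ₀ Set.univ (mem_univ _) (mem_univ _)).trans
          (mul_le_mul_left hC _)
      have hsd' : edist (x j) (s j) ≤ (1 + (δ : ℝ≥0∞)) * edist (x j) t :=
        (hsd j).le.trans (mul_le_mul_right (EMetric.infEdist_le_edist_of_mem ht) _)
      have h2 : edist (φ (s j)) (φ t) ≤ L * (edist (x j) (s j) + edist (x j) t) := by
        refine (hφ (hsS j) ht).trans (mul_le_mul_right ?_ _)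
        calc edist (s j) t ≤ edist (s j) (x j) + edist (x j) t := edist_triangle _ _ _
          _ = edist (x j) (s j) + edist (x j) t := by rw [edist_comm]
      calc edist (Φ₀ (x j)) (φ t)
          ≤ edist (Φ₀ (x j)) (Φ₀ (s j)) + edist (φ (s j)) (φ t) := by
            rw [hΦ₀A (s j) ⟨j, rfl⟩]
            exact edist_triangle _ _ _
        _ ≤ (1 + (δ : ℝ≥0∞)) * KK * L * edist (x j) (s j) +
              L * (edist (x j) (s j) + edist (x j) t) := add_le_add h1 h2
        _ ≤ (1 + (δ : ℝ≥0∞)) * KK * L * ((1 + (δ : ℝ≥0∞)) * edist (x j) t) +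
              L * ((1 + (δ : ℝ≥0∞)) * edist (x j) t + edist (x j) t) := by gcongr
        _ = ((2 + (δ : ℝ≥0∞) + (1 + (δ : ℝ≥0∞)) ^ 2 * KK) * (L : ℝ≥0∞)) * edist (x j) t := by
            ring
    intro a ha b hb
    rcases ha with haS | ⟨i, rfl⟩ <;> rcases hb with hbS | ⟨j, rfl⟩
    · simp only [if_pos haS, if_pos hbS]
      refine (hφ haS hbS).trans (mul_le_mul_left ?_ _)
      calc (L : ℝ≥0∞) = 1 * L := (one_mul _).symm
        _ ≤ (2 + (δ : ℝ≥0∞) + (1 + (δ : ℝ≥0∞)) ^ 2 * KK) * L := by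
            refine mul_le_mul_left ?_ _
            calc (1 : ℝ≥0∞) ≤ 2 := one_le_two
              _ ≤ 2 + (δ : ℝ≥0∞) := le_self_add
              _ ≤ _ := le_self_add
    · simp only [if_pos haS, if_neg (hx j)]
      rw [edist_comm (φ a), edist_comm a (x j)]
      exact key j a haS
    · simp only [if_pos hbS, if_neg (hx i)]
      exact key i b hbS
    · simp only [if_neg (hx i), if_neg (hx j)]
      refine (edist_le_lipConstOn Φ₀ Set.univ (mem_univ _) (mem_univ _)).trans
        (mul_le_mul_left (hC.trans (mul_le_mul_left ?_ _)) _)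
      calc (1 + (δ : ℝ≥0∞)) * KK ≤ (1 + (δ : ℝ≥0∞)) ^ 2 * KK :=
            mul_le_mul_left (le_self_pow₀ (le_add_of_nonneg_right zero_le) two_ne_zero) _
        _ ≤ 2 + (δ : ℝ≥0∞) + (1 + (δ : ℝ≥0∞)) ^ 2 * KK := le_add_self
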